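/- Let X be a metric space, n ≥ 2, and p : Fin n → X a family of points. Then there exist a feasible system of radii r : Fin n → ℝ and a derangement σ of Fin n such that 2 · ∑_i r i = ∑_i dist (p i) (p (σ i)). Consequently, the maximum sum of radii of nonoverlapping balls centered at the points p i equals half of the minimum, over all derangements σ, of ∑_i dist (p i) (p (σ i)) (half the weight of a minimum cycle cover of the complete geometric graph on the points). -/

import Mathlib

open Finset

open Finset

private lemma shift_sum {n : ℕ} (f g : Fin n → ℝ) (a : ℝ) :
    ∑ i, (f i + a) + ∑ j, (g j - a) = ∑ i, f i + ∑ j, g j := by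
  rw [Finset.sum_add_distrib, Finset.sum_sub_distrib]
  abel

private lemma egervary {n : ℕ} (hn : 0 < n) (c : Fin n → Fin n → ℝ) (hc : ∀ i j, 0 ≤ c i j) :
    ∃ (u v : Fin n → ℝ) (σ : Equiv.Perm (Fin n)),
      (∀ i j, u i + v j ≤ c i j) ∧ (∀ i, u i + v (σ i) = c i (σ i)) := by
  classical
  have hn1 : Nonempty (Fin n) := Fin.pos_iff_nonempty.mp hn
  set M : ℝ := ∑ i, ∑ j, c i j with hMdef
  have hM : ∀ i j, c i j ≤ M := by
    intro i j
    calc c i j ≤ ∑ j', c i j' := single_le_sum (fun k _ => hc i k) (mem_univ j)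
    _ ≤ M := single_le_sum (fun k _ => sum_nonneg fun l _ => hc k l) (mem_univ i)
  have hM0 : 0 ≤ M := le_trans (hc (Classical.arbitrary _) (Classical.arbitrary _)) (hM _ _)
  set F : Set ((Fin n → ℝ) × (Fin n → ℝ)) :=
    {q | (∀ i j, q.1 i + q.2 j ≤ c i j) ∧ (∀ j, 0 ≤ q.2 j) ∧ (∃ j, q.2 j = 0) ∧
      0 ≤ ∑ i, q.1 i + ∑ j, q.2 j} with hFdef
  -- closedness
  have hFclosed : IsClosed F := by
    have h1 : IsClosed {q : (Fin n → ℝ) × (Fin n → ℝ) | ∀ i j, q.1 i + q.2 j ≤ c i j} := by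
      rw [Set.setOf_forall]
      refine isClosed_iInter fun i => ?_
      rw [Set.setOf_forall]
      exact isClosed_iInter fun j => isClosed_le
        (((continuous_apply i).comp continuous_fst).add
          ((continuous_apply j).comp continuous_snd)) continuous_const
    have h2 : IsClosed {q : (Fin n → ℝ) × (Fin n → ℝ) | ∀ j, 0 ≤ q.2 j} := by
      rw [Set.setOf_forall]
      exact isClosed_iInter fun j => isClosed_le continuous_const
        ((continuous_apply j).comp continuous_snd)
    have h3 : IsClosed {q : (Fin n → ℝ) × (Fin n → ℝ) | ∃ j, q.2 j = 0} := by
      rw [Set.setOf_exists]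
      exact isClosed_iUnion_of_finite fun j => isClosed_eq
        ((continuous_apply j).comp continuous_snd) continuous_const
    have h4 : IsClosed {q : (Fin n → ℝ) × (Fin n → ℝ) | 0 ≤ ∑ i, q.1 i + ∑ j, q.2 j} :=
      isClosed_le continuous_const
        ((continuous_finset_sum _ fun i _ => (continuous_apply i).comp continuous_fst).add
          (continuous_finset_sum _ fun j _ => (continuous_apply j).comp continuous_snd))
    have : F = _ ∩ (_ ∩ (_ ∩ _)) := rfl
    exact this ▸ ((h1.inter (h2.inter (h3.inter h4))))
  -- boundedness
  have hFsub : F ⊆ Set.Icc ((fun _ => -((n:ℝ)*M + (n:ℝ)*((n:ℝ)*M)), fun _ => (0:ℝ)))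
      ((fun _ => M, fun _ => (n:ℝ)*M)) := by
    rintro ⟨u, v⟩ hq
    rw [hFdef] at hq
    obtain ⟨hfeas, hv0, ⟨j₀, hj₀⟩, hsum⟩ := hq
    have huM : ∀ i, u i ≤ M := by
      intro i
      have := hfeas i j₀
      rw [hj₀] at this
      linarith [hM i j₀]
    obtain ⟨j₁, -, hj₁⟩ := Finset.exists_max_image Finset.univ v univ_nonempty
    have hVnn : 0 ≤ v j₁ := hv0 j₁
    have hvV : ∀ j, v j ≤ v j₁ := fun j => hj₁ j (mem_univ j)
    have huV : ∀ i, u i ≤ M - v j₁ := fun i => by linarith [hfeas i j₁, hM i j₁]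
    have hsumu : ∑ i, u i ≤ (n:ℝ) * (M - v j₁) := by
      calc ∑ i, u i ≤ ∑ _i : Fin n, (M - v j₁) := sum_le_sum fun i _ => huV i
      _ = (n:ℝ) * (M - v j₁) := by simp [mul_comm]; ring
    have hsumv : ∑ j, v j ≤ ((n:ℝ) - 1) * v j₁ := by
      have h1 : ∑ j, v j = v j₀ + ∑ j ∈ univ.erase j₀, v j :=
        (Finset.add_sum_erase _ v (mem_univ j₀)).symm
      have h2 : ∑ j ∈ univ.erase j₀, v j ≤ ∑ _j ∈ univ.erase j₀, v j₁ :=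
        sum_le_sum fun j _ => hvV j
      have h3 : ∑ _j ∈ univ.erase j₀, v j₁ = ((n:ℝ) - 1) * v j₁ := by
        rw [sum_const, card_erase_of_mem (mem_univ j₀), card_univ, Fintype.card_fin]
        rw [nsmul_eq_mul]
        congr 1
        rw [Nat.cast_sub hn]
        simp
      rw [show v j₀ = 0 from hj₀] at h1
      linarith [h1, h2, h3.le, h3.ge]
    have hV : v j₁ ≤ (n:ℝ) * M := by nlinarith [hsum, hsumu, hsumv]
    have hvnM : ∀ j, v j ≤ (n:ℝ) * M := fun j => le_trans (hvV j) hV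
    have hulo : ∀ i, -((n:ℝ)*M + (n:ℝ)*((n:ℝ)*M)) ≤ u i := by
      intro i
      have h1 : ∑ i', u i' = u i + ∑ i' ∈ univ.erase i, u i' :=
        (Finset.add_sum_erase _ u (mem_univ i)).symm
      have h2 : ∑ i' ∈ univ.erase i, u i' ≤ (n:ℝ) * M := by
        calc ∑ i' ∈ univ.erase i, u i' ≤ ∑ i' ∈ univ.erase i, M :=
          sum_le_sum fun i' _ => huM i'
        _ ≤ ∑ _i' : Fin n, M := sum_le_sum_of_subset_of_nonneg (subset_univ _)
            (fun _ _ _ => hM0)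
        _ = (n:ℝ) * M := by simp [mul_comm]
      have h3 : ∑ j, v j ≤ (n:ℝ) * ((n:ℝ)*M) := by
        calc ∑ j, v j ≤ ∑ _j : Fin n, (n:ℝ)*M := sum_le_sum fun j _ => hvnM j
        _ = (n:ℝ) * ((n:ℝ)*M) := by simp [mul_comm]
      linarith
    exact ⟨⟨fun i => hulo i, fun j => hv0 j⟩, ⟨fun i => huM i, fun j => hvnM j⟩⟩
  have hFcompact : IsCompact F := IsCompact.of_isClosed_subset isCompact_Icc hFclosed hFsub
  have hFne : F.Nonempty := by
    refine ⟨((fun _ => 0), (fun _ => 0)), ?_⟩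
    rw [hFdef]
    exact ⟨fun i j => by simpa using hc i j, fun j => le_refl 0,
      ⟨Classical.arbitrary _, rfl⟩, by simp⟩
  have hcont : Continuous (fun q : (Fin n → ℝ) × (Fin n → ℝ) => ∑ i, q.1 i + ∑ j, q.2 j) :=
    (continuous_finset_sum _ fun i _ => (continuous_apply i).comp continuous_fst).add
      (continuous_finset_sum _ fun j _ => (continuous_apply j).comp continuous_snd)
  obtain ⟨⟨u, v⟩, humem, hmax⟩ := hFcompact.exists_isMaxOn hFne
    (f := fun q : (Fin n → ℝ) × (Fin n → ℝ) => ∑ i, q.1 i + ∑ j, q.2 j) hcont.continuousOn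
  have hmem := humem
  rw [hFdef] at hmem
  obtain ⟨hfeas, hv0, hex0, hsum0⟩ := hmem
  suffices h : ∃ σ : Equiv.Perm (Fin n), (∀ i, u i + v (σ i) = c i (σ i)) by
    obtain ⟨σ, hσ⟩ := h
    exact ⟨u, v, σ, hfeas, hσ⟩
  set t : Fin n → Finset (Fin n) := fun i => univ.filter (fun j => u i + v j = c i j) with ht
  by_cases H : ∀ s : Finset (Fin n), s.card ≤ (s.biUnion t).card
  · obtain ⟨f, hfinj, hft⟩ := (Finset.all_card_le_biUnion_card_iff_exists_injective t).mp H
    have hbij : Function.Bijective f := Finite.injective_iff_bijective.mp hfinj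
    refine ⟨Equiv.ofBijective f hbij, fun i => ?_⟩
    have := hft i
    rw [ht] at this
    simp only [mem_filter] at this
    exact this.2
  · exfalso
    push_neg at H
    obtain ⟨S, hS⟩ := H
    set N : Finset (Fin n) := S.biUnion t with hN
    have hSne : S.Nonempty :=
      Finset.card_pos.mp (Nat.lt_of_le_of_lt (Nat.zero_le _) hS)
    have hNne : ∃ j, j ∉ N := by
      by_contra h
      push_neg at h
      have : N = univ := Finset.eq_univ_iff_forall.mpr h
      have h2 := Finset.card_le_univ S
      rw [this, Finset.card_univ] at hS; omega
    obtain ⟨jout, hjout⟩ := hNne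
    set P : Finset (Fin n × Fin n) := S ×ˢ Nᶜ with hP
    have hPne : P.Nonempty := ⟨(hSne.choose, jout), by
      rw [hP, Finset.mem_product]; exact ⟨hSne.choose_spec, Finset.mem_compl.mpr hjout⟩⟩
    obtain ⟨q₀, hq₀P, hq₀min⟩ := Finset.exists_min_image P (fun q => c q.1 q.2 - u q.1 - v q.2) hPne
    set ε : ℝ := c q₀.1 q₀.2 - u q₀.1 - v q₀.2 with hε
    have hslack_pos : ∀ q ∈ P, 0 < c q.1 q.2 - u q.1 - v q.2 := by
      rintro ⟨i, j⟩ hq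
      rw [hP, Finset.mem_product] at hq
      obtain ⟨hiS, hjN⟩ := hq
      rw [Finset.mem_compl] at hjN
      have hne : u i + v j ≠ c i j := by
        intro heq
        exact hjN (Finset.mem_biUnion.mpr ⟨i, hiS, by rw [ht]; simp [heq]⟩)
      have := hfeas i j
      rcases lt_or_eq_of_le this with h | h
      · linarith
      · exact absurd h hne
    have hεpos : 0 < ε := hslack_pos q₀ hq₀P
    set u' : Fin n → ℝ := fun i => u i + (if i ∈ S then ε else 0) with hu'
    set v' : Fin n → ℝ := fun j => v j - (if j ∈ N then ε else 0) with hv'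
    have hfeas' : ∀ i j, u' i + v' j ≤ c i j := by
      intro i j
      rw [hu', hv']
      by_cases hiS : i ∈ S
      · by_cases hjN : j ∈ N
        · simp only [hiS, hjN, if_pos]
          linarith [hfeas i j]
        · simp only [hiS, hjN, if_pos, if_neg, not_false_iff]
          have := hq₀min (i, j) (by
            rw [hP, Finset.mem_product]; exact ⟨hiS, Finset.mem_compl.mpr hjN⟩)
          simp only at this
          linarith [this]
      · simp only [hiS, if_neg, not_false_iff]
        have : (if j ∈ N then ε else 0) ≥ 0 := by positivity
        linarith [hfeas i j]
    have hsum_u' : ∑ i, u' i = ∑ i, u i + (S.card : ℝ) * ε := by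
      rw [hu', Finset.sum_add_distrib]
      congr 1
      rw [Finset.sum_ite_mem, Finset.univ_inter, Finset.sum_const, nsmul_eq_mul]
    have hsum_v' : ∑ j, v' j = ∑ j, v j - (N.card : ℝ) * ε := by
      rw [hv', Finset.sum_sub_distrib]
      congr 1
      rw [Finset.sum_ite_mem, Finset.univ_inter, Finset.sum_const, nsmul_eq_mul]
    have hgain : ∑ i, u i + ∑ j, v j < ∑ i, u' i + ∑ j, v' j := by
      rw [hsum_u', hsum_v']
      have : (N.card : ℝ) < (S.card : ℝ) := by exact_mod_cast hS
      nlinarith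
    obtain ⟨j₂, -, hj₂⟩ := Finset.exists_min_image univ v' univ_nonempty
    have hmem'' : ((fun i => u' i + v' j₂), (fun j => v' j - v' j₂)) ∈ F := by
      rw [hFdef]
      refine ⟨fun i j => ?_, fun j => ?_, ⟨j₂, sub_self _⟩, ?_⟩
      · show u' i + v' j₂ + (v' j - v' j₂) ≤ c i j
        linarith [hfeas' i j]
      · show 0 ≤ v' j - v' j₂
        linarith [hj₂ j (mem_univ j)]
      · show 0 ≤ ∑ i, (u' i + v' j₂) + ∑ j, (v' j - v' j₂)
        rw [shift_sum]
        linarith [hgain, hsum0]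
    have hle := hmax hmem''
    simp only [Set.mem_setOf_eq] at hle
    rw [shift_sum u' v' (v' j₂)] at hle
    linarith [hgain, hle]


private lemma nonneg_opt {X : Type*} [MetricSpace X] {n : ℕ} (hn : 2 ≤ n) (p : Fin n → X)
    (w0 : Fin n → ℝ) (hfeas0 : ∀ i j, i ≠ j → w0 i + w0 j ≤ dist (p i) (p j))
    (W : ℝ) (hW : W ≤ 2 * ∑ i, w0 i) :
    ∃ w : Fin n → ℝ, (∀ i, 0 ≤ w i) ∧ (∀ i j, i ≠ j → w i + w j ≤ dist (p i) (p j)) ∧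
      W ≤ 2 * ∑ i, w i := by
  classical
  have hcard : 1 < Fintype.card (Fin n) := by rw [Fintype.card_fin]; omega
  set Φ : (Fin n → ℝ) → ℝ := fun w => ∑ i, max (-(w i)) 0 with hΦ
  have hΦcont : Continuous Φ :=
    continuous_finset_sum _ fun i _ => ((continuous_apply i).neg).max continuous_const
  have hΦnn : ∀ (w : Fin n → ℝ) i, max (-(w i)) 0 ≤ Φ w := fun w i =>
    single_le_sum (f := fun k => max (-(w k)) 0) (fun k _ => le_max_right _ 0) (mem_univ i)
  set A : Set (Fin n → ℝ) :=
    {w | (∀ i j, i ≠ j → w i + w j ≤ dist (p i) (p j)) ∧ W ≤ 2 * ∑ i, w i ∧ Φ w ≤ Φ w0}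
    with hA
  have hAclosed : IsClosed A := by
    have h1 : IsClosed {w : Fin n → ℝ | ∀ i j, i ≠ j → w i + w j ≤ dist (p i) (p j)} := by
      rw [Set.setOf_forall]
      refine isClosed_iInter fun i => ?_
      rw [Set.setOf_forall]
      refine isClosed_iInter fun j => ?_
      by_cases hij : i = j
      · simp [hij]
      · have : {w : Fin n → ℝ | i ≠ j → w i + w j ≤ dist (p i) (p j)}
            = {w : Fin n → ℝ | w i + w j ≤ dist (p i) (p j)} := by
          ext w; simp [hij]
        rw [this]
        exact isClosed_le ((continuous_apply i).add (continuous_apply j)) continuous_const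
    have h2 : IsClosed {w : Fin n → ℝ | W ≤ 2 * ∑ i, w i} :=
      isClosed_le continuous_const
        (continuous_const.mul (continuous_finset_sum _ fun i _ => continuous_apply i))
    have h3 : IsClosed {w : Fin n → ℝ | Φ w ≤ Φ w0} := isClosed_le hΦcont continuous_const
    have : A = _ ∩ (_ ∩ _) := rfl
    exact this ▸ (h1.inter (h2.inter h3))
  have hAsub : A ⊆ Set.Icc (fun _ => -(Φ w0)) (fun i => Φ w0 + ∑ j, dist (p i) (p j)) := by
    intro w hw
    rw [hA] at hw
    obtain ⟨hfeas, hsum, hphi⟩ := hw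
    have hlo : ∀ i, -(Φ w0) ≤ w i := by
      intro i
      have h1 : -(w i) ≤ Φ w := le_trans (le_max_left _ 0) (hΦnn w i)
      linarith
    constructor
    · intro i; exact hlo i
    · intro i
      show w i ≤ Φ w0 + ∑ j, dist (p i) (p j)
      obtain ⟨j, hj⟩ := Fintype.exists_ne_of_one_lt_card hcard i
      have h1 : w i + w j ≤ dist (p i) (p j) := hfeas i j (Ne.symm hj)
      have h2 : dist (p i) (p j) ≤ ∑ k, dist (p i) (p k) :=
        single_le_sum (fun k _ => dist_nonneg) (mem_univ j)
      have h3 := hlo j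
      linarith
  have hAcompact : IsCompact A := IsCompact.of_isClosed_subset isCompact_Icc hAclosed hAsub
  have hAne : A.Nonempty := ⟨w0, by rw [hA]; exact ⟨hfeas0, hW, le_refl _⟩⟩
  obtain ⟨w, hwA, hmin⟩ := hAcompact.exists_isMinOn hAne hΦcont.continuousOn
  have hwA' := hwA
  rw [hA] at hwA'
  obtain ⟨hfeas, hsum, hphi⟩ := hwA'
  refine ⟨w, ?_, hfeas, hsum⟩
  by_contra hneg
  push_neg at hneg
  obtain ⟨i, hi⟩ := hneg
  -- helper: decompose Φ and sums at i (and possibly a second index)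
  by_cases hT : ∃ j, j ≠ i ∧ w i + w j = dist (p i) (p j)
  · -- tight neighbor case: transfer from j to i
    obtain ⟨j, hji, htight⟩ := hT
    have hdnn : (0:ℝ) ≤ dist (p i) (p j) := dist_nonneg
    have hwj : 0 < w j := by linarith
    -- candidate epsilons
    set s : Finset (Fin n) := (univ.erase i).erase j with hs
    set T : Finset ℝ :=
      insert (-(w i)) (insert (w j) (s.image (fun k => dist (p i) (p k) - w i - w k))) with hTdef
    have hTne : T.Nonempty := ⟨-(w i), by rw [hTdef]; exact mem_insert_self _ _⟩
    set ε : ℝ := T.min' hTne with hε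
    have hεmem := T.min'_mem hTne
    have hεle : ∀ x ∈ T, ε ≤ x := fun x hx => T.min'_le x hx
    have hε1 : ε ≤ -(w i) := hεle _ (by rw [hTdef]; exact mem_insert_self _ _)
    have hε2 : ε ≤ w j := hεle _ (by rw [hTdef]; exact mem_insert_of_mem (mem_insert_self _ _))
    have hε3 : ∀ k ∈ s, ε ≤ dist (p i) (p k) - w i - w k := fun k hk =>
      hεle _ (by rw [hTdef]; exact mem_insert_of_mem (mem_insert_of_mem
        (mem_image.mpr ⟨k, hk, rfl⟩)))
    have hεpos : 0 < ε := by
      rw [hε]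
      rw [Finset.lt_min'_iff]
      intro x hx
      rw [hTdef] at hx
      rcases Finset.mem_insert.mp hx with h | hx
      · rw [h]; linarith
      rcases Finset.mem_insert.mp hx with h | hx
      · rw [h]; exact hwj
      obtain ⟨k, hk, rfl⟩ := Finset.mem_image.mp hx
      rw [hs, Finset.mem_erase, Finset.mem_erase] at hk
      obtain ⟨hkj, hki, -⟩ := hk
      -- w k ≤ dist (p j) (p k) - w j, and triangle inequality
      have h1 : w j + w k ≤ dist (p j) (p k) := hfeas j k hkj.symm
      have h2 : dist (p j) (p k) ≤ dist (p j) (p i) + dist (p i) (p k) := dist_triangle _ _ _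
      have h3 : dist (p j) (p i) = dist (p i) (p j) := dist_comm _ _
      -- w j = dist i j - w i
      nlinarith [hi]
    -- the improved point
    set w' : Fin n → ℝ := Function.update (Function.update w i (w i + ε)) j (w j - ε) with hw'
    have hw'i : w' i = w i + ε := by
      rw [hw', Function.update_of_ne (Ne.symm hji), Function.update_self]
    have hw'j : w' j = w j - ε := by rw [hw', Function.update_self]
    have hw'k : ∀ k, k ≠ i → k ≠ j → w' k = w k := by
      intro k hki hkj
      rw [hw', Function.update_of_ne hkj, Function.update_of_ne hki]
    -- decomposition helper
    have hdecomp : ∀ f : Fin n → ℝ, ∑ x, f x = f i + (f j + ∑ x ∈ s, f x) := by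
      intro f
      rw [hs]
      rw [Finset.add_sum_erase (univ.erase i) f (Finset.mem_erase.mpr ⟨hji, mem_univ j⟩)]
      rw [Finset.add_sum_erase univ f (mem_univ i)]
    have hsum' : ∑ x, w' x = ∑ x, w x := by
      rw [hdecomp w', hdecomp w, hw'i, hw'j]
      have : ∑ x ∈ s, w' x = ∑ x ∈ s, w x := by
        refine Finset.sum_congr rfl fun k hk => ?_
        rw [hs, Finset.mem_erase, Finset.mem_erase] at hk
        exact hw'k k hk.2.1 hk.1
      rw [this]; ring
    have hΦ' : Φ w' = Φ w - ε := by
      rw [hΦ]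
      simp only
      rw [hdecomp (fun x => max (-(w' x)) 0), hdecomp (fun x => max (-(w x)) 0)]
      simp only [hw'i, hw'j]
      have e1 : max (-(w i + ε)) 0 = -(w i) - ε := by
        rw [max_eq_left (by linarith)]; ring
      have e2 : max (-(w i)) 0 = -(w i) := max_eq_left (by linarith)
      have e3 : max (-(w j - ε)) 0 = 0 := max_eq_right (by linarith)
      have e4 : max (-(w j)) 0 = 0 := max_eq_right (by linarith)
      have e5 : ∑ x ∈ s, max (-(w' x)) 0 = ∑ x ∈ s, max (-(w x)) 0 := by
        refine Finset.sum_congr rfl fun k hk => ?_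
        rw [hs, Finset.mem_erase, Finset.mem_erase] at hk
        rw [hw'k k hk.2.1 hk.1]
      rw [e1, e2, e3, e4, e5]; ring
    have hw'A : w' ∈ A := by
      rw [hA]
      refine ⟨?_, ?_, ?_⟩
      · intro a b hab
        rcases eq_or_ne a i with rfl | hai
        · rcases eq_or_ne b j with rfl | hbj
          · rw [hw'i, hw'j]; linarith [htight]
          · rw [hw'i, hw'k b (Ne.symm hab) hbj]
            have hbs : b ∈ s := by
              rw [hs, Finset.mem_erase, Finset.mem_erase]
              exact ⟨hbj, Ne.symm hab, mem_univ b⟩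
            linarith [hε3 b hbs]
        · rcases eq_or_ne a j with rfl | haj
          · rcases eq_or_ne b i with rfl | hbi
            · rw [hw'i, hw'j, dist_comm]; linarith [htight]
            · rw [hw'j, hw'k b hbi (Ne.symm hab)]
              linarith [hfeas a b hab]
          · rcases eq_or_ne b i with rfl | hbi
            · rw [hw'i, hw'k a hai haj]
              have has : a ∈ s := by
                rw [hs, Finset.mem_erase, Finset.mem_erase]
                exact ⟨haj, hai, mem_univ a⟩
              have := hε3 a has
              have hd : dist (p b) (p a) = dist (p a) (p b) := dist_comm _ _
              rw [dist_comm (p a) (p b)]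
              linarith
            · rcases eq_or_ne b j with rfl | hbj
              · rw [hw'j, hw'k a hai haj]
                have := hfeas a b hab
                linarith
              · rw [hw'k a hai haj, hw'k b hbi hbj]
                exact hfeas a b hab
      · rw [hsum']; exact hsum
      · rw [hΦ']; linarith
    have := hmin hw'A
    simp only [Set.mem_setOf_eq] at this
    rw [hΦ'] at this
    linarith
  · -- no tight neighbor: increase w i alone
    push_neg at hT
    have hslack : ∀ k, k ≠ i → w i + w k < dist (p i) (p k) := by
      intro k hk
      exact lt_of_le_of_ne (hfeas i k (Ne.symm hk)) (hT k hk)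
    set s : Finset (Fin n) := univ.erase i with hs
    have hsne : s.Nonempty := by
      obtain ⟨j, hj⟩ := Fintype.exists_ne_of_one_lt_card hcard i
      exact ⟨j, by rw [hs]; exact Finset.mem_erase.mpr ⟨hj, mem_univ j⟩⟩
    set T : Finset ℝ := insert (-(w i)) (s.image (fun k => dist (p i) (p k) - w i - w k))
      with hTdef
    have hTne : T.Nonempty := ⟨-(w i), by rw [hTdef]; exact mem_insert_self _ _⟩
    set ε : ℝ := T.min' hTne with hε
    have hεle : ∀ x ∈ T, ε ≤ x := fun x hx => T.min'_le x hx
    have hε1 : ε ≤ -(w i) := hεle _ (by rw [hTdef]; exact mem_insert_self _ _)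
    have hε3 : ∀ k ∈ s, ε ≤ dist (p i) (p k) - w i - w k := fun k hk =>
      hεle _ (by rw [hTdef]; exact mem_insert_of_mem (mem_image.mpr ⟨k, hk, rfl⟩))
    have hεpos : 0 < ε := by
      rw [hε, Finset.lt_min'_iff]
      intro x hx
      rw [hTdef] at hx
      rcases Finset.mem_insert.mp hx with h | hx
      · rw [h]; linarith
      obtain ⟨k, hk, rfl⟩ := Finset.mem_image.mp hx
      rw [hs, Finset.mem_erase] at hk
      linarith [hslack k hk.1]
    set w' : Fin n → ℝ := Function.update w i (w i + ε) with hw'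
    have hw'i : w' i = w i + ε := by rw [hw', Function.update_self]
    have hw'k : ∀ k, k ≠ i → w' k = w k := fun k hk => by
      rw [hw', Function.update_of_ne hk]
    have hdecomp : ∀ f : Fin n → ℝ, ∑ x, f x = f i + ∑ x ∈ s, f x := by
      intro f
      rw [hs, ← Finset.add_sum_erase univ f (mem_univ i)]
    have hsum' : ∑ x, w' x = ∑ x, w x + ε := by
      rw [hdecomp w', hdecomp w, hw'i]
      have : ∑ x ∈ s, w' x = ∑ x ∈ s, w x := by
        refine Finset.sum_congr rfl fun k hk => ?_
        rw [hs, Finset.mem_erase] at hk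
        exact hw'k k hk.1
      rw [this]; ring
    have hΦ' : Φ w' = Φ w - ε := by
      rw [hΦ]
      simp only
      rw [hdecomp (fun x => max (-(w' x)) 0), hdecomp (fun x => max (-(w x)) 0)]
      simp only [hw'i]
      have e1 : max (-(w i + ε)) 0 = -(w i) - ε := by
        rw [max_eq_left (by linarith)]; ring
      have e2 : max (-(w i)) 0 = -(w i) := max_eq_left (by linarith)
      have e5 : ∑ x ∈ s, max (-(w' x)) 0 = ∑ x ∈ s, max (-(w x)) 0 := by
        refine Finset.sum_congr rfl fun k hk => ?_
        rw [hs, Finset.mem_erase] at hk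
        rw [hw'k k hk.1]
      rw [e1, e2, e5]; ring
    have hw'A : w' ∈ A := by
      rw [hA]
      refine ⟨?_, ?_, ?_⟩
      · intro a b hab
        rcases eq_or_ne a i with rfl | hai
        · rw [hw'i, hw'k b (Ne.symm hab)]
          have hbs : b ∈ s := by rw [hs]; exact Finset.mem_erase.mpr ⟨Ne.symm hab, mem_univ b⟩
          linarith [hε3 b hbs]
        · rcases eq_or_ne b i with rfl | hbi
          · rw [hw'i, hw'k a hai]
            have has : a ∈ s := by rw [hs]; exact Finset.mem_erase.mpr ⟨hai, mem_univ a⟩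
            rw [dist_comm (p a) (p b)]
            linarith [hε3 a has]
          · rw [hw'k a hai, hw'k b hbi]
            exact hfeas a b hab
      · rw [hsum']; linarith
      · rw [hΦ']; linarith
    have := hmin hw'A
    simp only [Set.mem_setOf_eq] at this
    rw [hΦ'] at this
    linarith


/-- Strong duality: there exist a feasible system of radii and a derangement
(cycle cover) whose weight is exactly twice the sum of radii; consequently the
maximum sum of radii of nonoverlapping balls equals half the minimum weight of
a cycle cover of the complete geometric graph on the points. -/
theorem max_radius_sum_eq_half_min_cycle_cover
    {X : Type*} [MetricSpace X] (n : ℕ) (hn : 2 ≤ n) (p : Fin n → X) :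
    ∃ (r : Fin n → ℝ) (σ : Equiv.Perm (Fin n)),
      (∀ i, 0 ≤ r i) ∧
      (∀ i j, i ≠ j → r i + r j ≤ dist (p i) (p j)) ∧
      (∀ i, σ i ≠ i) ∧
      2 * ∑ i, r i = ∑ i, dist (p i) (p (σ i)) ∧
      (∀ r' : Fin n → ℝ, (∀ i, 0 ≤ r' i) →
        (∀ i j, i ≠ j → r' i + r' j ≤ dist (p i) (p j)) →
        ∑ i, r' i ≤ ∑ i, r i) ∧
      (∀ σ' : Equiv.Perm (Fin n), (∀ i, σ' i ≠ i) →
        ∑ i, dist (p i) (p (σ i)) ≤ ∑ i, dist (p i) (p (σ' i))) := by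
  classical
  obtain ⟨m, rfl⟩ : ∃ m, n = m + 2 := ⟨n - 2, by omega⟩
  set B : ℝ := 1 + ∑ i, ∑ j, dist (p i) (p j) with hB
  have hdsum_nn : (0:ℝ) ≤ ∑ i, ∑ j, dist (p i) (p j) :=
    sum_nonneg fun i _ => sum_nonneg fun j _ => dist_nonneg
  have hBpos : 0 < B := by rw [hB]; linarith
  set c : Fin (m + 2) → Fin (m + 2) → ℝ := fun i j => if i = j then B else dist (p i) (p j) with hc
  have hcnn : ∀ i j, 0 ≤ c i j := by
    intro i j
    rw [hc]
    by_cases h : i = j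
    · simp [h]; linarith
    · simp [h]
  have hcd : ∀ i j, i ≠ j → c i j = dist (p i) (p j) := by
    intro i j h; rw [hc]; simp [h]
  obtain ⟨u, v, σ, hfeas, htight⟩ := egervary (by omega) c hcnn
  -- cost of σ equals dual value
  have hcost : ∑ i, c i (σ i) = ∑ i, u i + ∑ i, v i := by
    calc ∑ i, c i (σ i) = ∑ i, (u i + v (σ i)) :=
        Finset.sum_congr rfl fun i _ => (htight i).symm
    _ = ∑ i, u i + ∑ i, v (σ i) := Finset.sum_add_distrib
    _ = ∑ i, u i + ∑ i, v i := by rw [Equiv.sum_comp σ v]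
  -- σ minimizes cost among all permutations
  have hminperm : ∀ τ : Equiv.Perm (Fin (m + 2)), ∑ i, c i (σ i) ≤ ∑ i, c i (τ i) := by
    intro τ
    rw [hcost]
    calc ∑ i, u i + ∑ i, v i = ∑ i, u i + ∑ i, v (τ i) := by rw [Equiv.sum_comp τ v]
    _ = ∑ i, (u i + v (τ i)) := Finset.sum_add_distrib.symm
    _ ≤ ∑ i, c i (τ i) := Finset.sum_le_sum fun i _ => hfeas i (τ i)
  -- the rotation is a derangement
  have hrot : ∀ i : Fin (m + 2), (finRotate (m + 2)) i ≠ i := by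
    intro i h
    rw [finRotate_succ_apply] at h
    have h2 : (i + 1).val = i.val := congrArg Fin.val h
    rw [Fin.val_add_one] at h2
    by_cases hl : i = Fin.last (m + 1)
    · rw [if_pos hl] at h2
      rw [hl] at h2
      simp [Fin.last] at h2
    · rw [if_neg hl] at h2
      omega
  -- σ has no fixed point
  have hder : ∀ i, σ i ≠ i := by
    intro i0 h0
    have h1 : B ≤ ∑ i, c i (σ i) := by
      have h1' := Finset.single_le_sum (f := fun i => c i (σ i))
        (fun k _ => hcnn k (σ k)) (mem_univ i0)
      rw [h0] at h1'
      have : c i0 i0 = B := by rw [hc]; simp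
      rw [this] at h1'
      exact h1'
    have h2 : ∑ i, c i (σ i) ≤ ∑ i, c i ((finRotate (m + 2)) i) := hminperm (finRotate (m + 2))
    have h3 : ∑ i, c i ((finRotate (m + 2)) i) = ∑ i, dist (p i) (p ((finRotate (m + 2)) i)) :=
      Finset.sum_congr rfl fun i _ => hcd i _ (fun he => hrot i he.symm)
    have h4 : ∑ i, dist (p i) (p ((finRotate (m + 2)) i)) ≤ ∑ i, ∑ j, dist (p i) (p j) :=
      Finset.sum_le_sum fun i _ =>
        Finset.single_le_sum (fun j _ => dist_nonneg) (mem_univ ((finRotate (m + 2)) i))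
    rw [hB] at h1
    linarith
  have hcσ : ∑ i, c i (σ i) = ∑ i, dist (p i) (p (σ i)) :=
    Finset.sum_congr rfl fun i _ => hcd i (σ i) (fun he => hder i he.symm)
  set W : ℝ := ∑ i, dist (p i) (p (σ i)) with hWdef
  -- symmetrize the dual solution
  set w0 : Fin (m + 2) → ℝ := fun i => (u i + v i) / 2 with hw0
  have hfeas0 : ∀ i j, i ≠ j → w0 i + w0 j ≤ dist (p i) (p j) := by
    intro i j hij
    have h1 := hfeas i j
    have h2 := hfeas j i
    rw [hcd i j hij] at h1
    rw [hcd j i (Ne.symm hij), dist_comm (p j) (p i)] at h2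
    rw [hw0]
    simp only
    linarith
  have hW0 : W ≤ 2 * ∑ i, w0 i := by
    have he : 2 * ∑ i, w0 i = ∑ i, u i + ∑ i, v i := by
      rw [hw0, Finset.mul_sum, ← Finset.sum_add_distrib]
      exact Finset.sum_congr rfl fun i _ => by ring
    rw [he, ← hcost, hcσ]
  obtain ⟨r, hr0, hrfeas, hrW⟩ := nonneg_opt (by omega) p w0 hfeas0 W hW0
  -- weak duality
  have hweak : ∀ r' : Fin (m + 2) → ℝ, (∀ i j, i ≠ j → r' i + r' j ≤ dist (p i) (p j)) →
      2 * ∑ i, r' i ≤ W := by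
    intro r' hr'
    have he : 2 * ∑ i, r' i = ∑ i, (r' i + r' (σ i)) := by
      rw [Finset.sum_add_distrib, Equiv.sum_comp σ r']; ring
    rw [he, hWdef]
    exact Finset.sum_le_sum fun i _ => hr' i (σ i) (fun he2 => hder i he2.symm)
  have heq : 2 * ∑ i, r i = W := le_antisymm (hweak r hrfeas) hrW
  refine ⟨r, σ, hr0, hrfeas, hder, heq, ?_, ?_⟩
  · intro r' _ hr'feas
    have := hweak r' hr'feas
    linarith
  · intro σ' hσ'
    have h1 : ∑ i, c i (σ' i) = ∑ i, dist (p i) (p (σ' i)) :=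
      Finset.sum_congr rfl fun i _ => hcd i (σ' i) (fun he => hσ' i he.symm)
    have := hminperm σ'
    rw [hcσ, h1] at this
    exact this
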